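/- arXiv:quant-ph/0301058 — 3 statements merged into one kernel-verified Lean document; each statement's English description precedes it below -/
import Mathlib

section
/- For every M ≥ 1 and every n ≥ 1, the set A_n is a closed convex cone in the real vector space of Hermitian 2M×2M complex matrices. -/
open Matrix
open scoped ComplexOrder

noncomputable section

/-- A `2 × M` block matrix `ρ = [[A, B], [Bᴴ, D]]` (indexed by `Fin M ⊕ Fin M`) is
`2 × M` separable if it is a finite sum of Kronecker products `(x xᴴ) ⊗ (y yᴴ)`
with `x ∈ ℂ²`, `y ∈ ℂ^M`; in block form the Kronecker product `(x xᴴ) ⊗ (y yᴴ)` has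
`(r, s)` block `x_r conj(x_s) • (y yᴴ)`. -/
def Separable2xM (M : ℕ) (ρ : Matrix (Fin M ⊕ Fin M) (Fin M ⊕ Fin M) ℂ) : Prop :=
  ∃ (k : ℕ) (x : Fin k → Fin 2 → ℂ) (y : Fin k → Fin M → ℂ),
    ρ = ∑ i : Fin k,
      fromBlocks
        ((x i 0 * star (x i 0)) • vecMulVec (y i) (star (y i)))
        ((x i 0 * star (x i 1)) • vecMulVec (y i) (star (y i)))
        ((x i 1 * star (x i 0)) • vecMulVec (y i) (star (y i)))
        ((x i 1 * star (x i 1)) • vecMulVec (y i) (star (y i)))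

/-- Conditions (i)–(v) on the blocks `Γ_{ij}` relative to `A`, `B`, `D`:
`Γ_{ij}^{(a)} = (Γ i j).toBlocks₁₁`, `Γ_{ij}^{(b)} = (Γ i j).toBlocks₁₂`,
`Γ_{ij}^{(c)} = (Γ i j).toBlocks₂₁`, `Γ_{ij}^{(d)} = (Γ i j).toBlocks₂₂`. -/
def GammaLin (M n : ℕ) (A B D : Matrix (Fin M) (Fin M) ℂ)
    (Γ : ℕ → ℕ → Matrix (Fin M ⊕ Fin M) (Fin M ⊕ Fin M) ℂ) : Prop :=
  (∑ i ∈ Finset.range (n + 1), (Γ i i).toBlocks₁₁ = A) ∧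
  (∑ i ∈ Finset.range (n + 1), (Γ i i).toBlocks₂₂ = D) ∧
  (∑ i ∈ Finset.range n,
      (1 / 2 : ℂ) • ((Γ i (i + 1)).toBlocks₂₁ + (Γ i (i + 1)).toBlocks₁₂) = B) ∧
  (∑ i ∈ Finset.range (n + 1), ((Γ i i).toBlocks₂₁ - (Γ i i).toBlocks₁₂) = 0) ∧
  (∀ k, 1 ≤ k → k ≤ n →
    ∑ i ∈ Finset.range (n + 1 - k),
      ((Γ i (i + k)).toBlocks₂₁ - (Γ i (i + k)).toBlocks₁₂) = 0)

/-- The `(n+1) × (n+1)` block matrix `(Γ_{ij})_{i,j=0}^n` assembled into one matrix. -/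
def GammaSection (M n : ℕ) (Γ : ℕ → ℕ → Matrix (Fin M ⊕ Fin M) (Fin M ⊕ Fin M) ℂ) :
    Matrix (Fin (n + 1) × (Fin M ⊕ Fin M)) (Fin (n + 1) × (Fin M ⊕ Fin M)) ℂ :=
  Matrix.of fun p q => Γ p.1.val q.1.val p.2 q.2

/-- The set `G(ρ; n)` for `ρ = [[A, B], [Bᴴ, D]]`: positive semidefinite block matrices
`Γ = (Γ_{ij})_{i,j=0}^n` satisfying (i)–(v). -/
def GammaSet (M n : ℕ) (A B D : Matrix (Fin M) (Fin M) ℂ) :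
    Set (ℕ → ℕ → Matrix (Fin M ⊕ Fin M) (Fin M ⊕ Fin M) ℂ) :=
  {Γ | (GammaSection M n Γ).PosSemidef ∧ GammaLin M n A B D Γ}

/-- The cone `A_n = { ρ = [[A, B], [Bᴴ, D]] : G(ρ; n) ≠ ∅ }`. -/
def ASet (M n : ℕ) : Set (Matrix (Fin M ⊕ Fin M) (Fin M ⊕ Fin M) ℂ) :=
  {ρ | ∃ A B D : Matrix (Fin M) (Fin M) ℂ,
    ρ = fromBlocks A B Bᴴ D ∧ (GammaSet M n A B D).Nonempty}

/-! ### Auxiliary lemmas -/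

section Aux

open Filter

variable {ι : Type*} [Fintype ι] [DecidableEq ι]

instance auxMatFC : FirstCountableTopology (Matrix ι ι ℂ) :=
  inferInstanceAs (FirstCountableTopology (ι → ι → ℂ))

instance auxMatSeq : SequentialSpace (Matrix ι ι ℂ) :=
  inferInstanceAs (SequentialSpace (ι → ι → ℂ))

lemma aux_complex_nonneg_of_tendsto {f : ℕ → ℂ} {z : ℂ}
    (h : Tendsto f atTop (nhds z)) (hf : ∀ k, 0 ≤ f k) : 0 ≤ z := by
  rw [Complex.le_def]
  constructor
  · have hre : Tendsto (fun k => (f k).re) atTop (nhds z.re) :=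
      (Complex.continuous_re.tendsto _).comp h
    have : (0:ℂ).re ≤ z.re := le_of_tendsto_of_tendsto tendsto_const_nhds hre
      (Filter.Eventually.of_forall fun k => ((Complex.le_def).mp (hf k)).1)
    simpa using this
  · have him : Tendsto (fun k => (f k).im) atTop (nhds z.im) :=
      (Complex.continuous_im.tendsto _).comp h
    have h0 : Tendsto (fun k => (f k).im) atTop (nhds (0:ℝ)) := by
      have he : (fun k => (f k).im) = fun _ => (0:ℝ) := by
        funext k; exact (((Complex.le_def).mp (hf k)).2).symm
      rw [he]; exact tendsto_const_nhds
    simpa using (tendsto_nhds_unique him h0).symm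

lemma aux_psd_diag_nonneg {X : Matrix ι ι ℂ} (hX : X.PosSemidef) (p : ι) : 0 ≤ X p p := by
  have := hX.dotProduct_mulVec_nonneg (Pi.single p 1)
  simpa [mulVec_single, dotProduct, Pi.single_apply, apply_ite] using this

lemma aux_psd_entry_norm_le {X : Matrix ι ι ℂ} (hX : X.PosSemidef) (p q : ι) :
    ‖X p q‖ ≤ (X p p).re + (X q q).re := by
  have hpp : (0:ℝ) ≤ (X p p).re := by
    simpa using (Complex.le_def.mp (aux_psd_diag_nonneg hX p)).1
  have hqq : (0:ℝ) ≤ (X q q).re := by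
    simpa using (Complex.le_def.mp (aux_psd_diag_nonneg hX q)).1
  rcases eq_or_ne p q with rfl | hne
  · have h1 : X p p = ((X p p).re : ℂ) := by
      apply Complex.ext
      · rfl
      · simpa using (Complex.le_def.mp (aux_psd_diag_nonneg hX p)).2.symm
    rw [h1]
    simp only [Complex.norm_real, Real.norm_eq_abs, Complex.ofReal_re]
    rw [abs_of_nonneg hpp]; linarith
  · by_cases h0 : X p q = 0
    · simp [h0]; linarith
    · set r : ℝ := ‖X p q‖ with hr
      have hrpos : 0 < r := norm_pos_iff.mpr h0
      set c : ℂ := -star (X p q) with hc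
      set x : ι → ℂ := Pi.single p (r : ℂ) + Pi.single q c with hx
      have hQ := hX.dotProduct_mulVec_nonneg x
      have hxs : star x = Pi.single p ((r:ℂ)) + Pi.single q (star c) := by
        funext a
        rcases eq_or_ne a p with rfl | hap
        · simp [hx, Pi.single_apply, hne]
        · rcases eq_or_ne a q with rfl | haq
          · simp [hx, Pi.single_apply, hne.symm, hap]
          · simp [hx, Pi.single_apply, hap, haq]
      have hherm : X q p = star (X p q) := by
        have := congrFun (congrFun hX.1 q) p
        simpa [conjTranspose_apply] using this.symm
      have hns : Complex.normSq (X p q) = r * r := by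
        rw [← Complex.sq_norm]; ring
      have hkey : star x ⬝ᵥ X *ᵥ x
          = ((r*r : ℝ) : ℂ) * (X p p + X q q) + ((-(2*(r*r*r)) : ℝ) : ℂ) := by
        rw [hxs, hx]
        simp only [Matrix.mulVec_add, Matrix.mulVec_single, add_dotProduct,
          dotProduct_add, single_dotProduct]
        simp [Pi.single_apply, hne, hne.symm]
        have e3 : X p q * (starRingEnd ℂ) (X p q) = ((r:ℂ) * (r:ℂ)) := by
          have := Complex.mul_conj (X p q)
          rw [this, hns]; push_cast; ring
        rw [hc, hherm]
        simp only [Complex.star_def, map_neg, Complex.conj_conj]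
        push_cast
        linear_combination (X q q - 2*(r:ℂ)) * e3
      rw [hkey] at hQ
      have hre := (Complex.le_def.mp hQ).1
      have h2 : r * r * ((X p p).re + (X q q).re) + -(2*(r*r*r)) ≥ 0 := by
        simpa [Complex.add_re, Complex.re_ofReal_mul] using hre
      nlinarith [h2, hrpos, hpp, hqq, mul_pos hrpos hrpos,
        mul_pos (mul_pos hrpos hrpos) hrpos]

lemma aux_compact_entries (T : ℝ) :
    IsCompact {Y : Matrix ι ι ℂ | ∀ u v, ‖Y u v‖ ≤ T} := by
  have h : IsCompact (Set.univ.pi fun _u : ι => Set.univ.pi fun _v : ι =>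
      Metric.closedBall (0:ℂ) T) :=
    isCompact_univ_pi fun _ => isCompact_univ_pi fun _ => isCompact_closedBall _ _
  show IsCompact {Y : ι → ι → ℂ | ∀ u v, ‖Y u v‖ ≤ T}
  convert h using 1
  ext Y
  show (∀ u v, ‖Y u v‖ ≤ T) ↔ _
  rw [Set.mem_univ_pi]
  refine forall_congr' fun u => ?_
  rw [Set.mem_univ_pi]
  refine forall_congr' fun v => ?_
  simp [Metric.mem_closedBall, dist_eq_norm]

end Aux

/-- Entrywise form of `GammaLin`. -/
lemma gammaLin_iff (M n : ℕ) (A B D : Matrix (Fin M) (Fin M) ℂ)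
    (Γ : ℕ → ℕ → Matrix (Fin M ⊕ Fin M) (Fin M ⊕ Fin M) ℂ) :
    GammaLin M n A B D Γ ↔
    (∀ a b, ∑ i ∈ Finset.range (n + 1), Γ i i (Sum.inl a) (Sum.inl b) = A a b) ∧
    (∀ a b, ∑ i ∈ Finset.range (n + 1), Γ i i (Sum.inr a) (Sum.inr b) = D a b) ∧
    (∀ a b, ∑ i ∈ Finset.range n,
        (1 / 2 : ℂ) * (Γ i (i + 1) (Sum.inr a) (Sum.inl b)
          + Γ i (i + 1) (Sum.inl a) (Sum.inr b)) = B a b) ∧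
    (∀ a b, ∑ i ∈ Finset.range (n + 1),
        (Γ i i (Sum.inr a) (Sum.inl b) - Γ i i (Sum.inl a) (Sum.inr b)) = 0) ∧
    (∀ k, 1 ≤ k → k ≤ n → ∀ a b, ∑ i ∈ Finset.range (n + 1 - k),
        (Γ i (i + k) (Sum.inr a) (Sum.inl b) - Γ i (i + k) (Sum.inl a) (Sum.inr b)) = 0) := by
  have hext : ∀ (P Q : Matrix (Fin M) (Fin M) ℂ), P = Q ↔ ∀ a b, P a b = Q a b := by
    intro P Q; constructor
    · intro h a b; rw [h]
    · intro h; ext a b; exact h a b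
  simp only [GammaLin, hext, Matrix.sum_apply, Matrix.smul_apply, Matrix.add_apply,
    Matrix.sub_apply, Matrix.zero_apply, Matrix.toBlocks₁₁, Matrix.toBlocks₁₂,
    Matrix.toBlocks₂₁, Matrix.toBlocks₂₂, Matrix.of_apply, smul_eq_mul]

/-- Every member of `ASet M n` is Hermitian. -/
lemma aset_mem_isHermitian (M n : ℕ) {ρ : Matrix (Fin M ⊕ Fin M) (Fin M ⊕ Fin M) ℂ}
    (h : ρ ∈ ASet M n) : ρ.IsHermitian := by
  obtain ⟨A, B, D, rfl, Γ, hPSD, hLin⟩ := h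
  have hH : (GammaSection M n Γ)ᴴ = GammaSection M n Γ := hPSD.1
  have hent : ∀ (i : Fin (n+1)) (p q : Fin M ⊕ Fin M),
      star (Γ i.val i.val q p) = Γ i.val i.val p q := by
    intro i p q
    have := congrFun (congrFun hH (i, p)) (i, q)
    simpa [GammaSection, conjTranspose_apply] using this
  obtain ⟨h1, h2, h3, h4, h5⟩ := (gammaLin_iff M n A B D Γ).mp hLin
  have hA : Aᴴ = A := by
    ext a b
    rw [conjTranspose_apply, ← h1 b a, ← h1 a b]
    rw [show (star (∑ i ∈ Finset.range (n + 1), Γ i i (Sum.inl b) (Sum.inl a)) : ℂ)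
      = (starRingEnd ℂ) (∑ i ∈ Finset.range (n + 1), Γ i i (Sum.inl b) (Sum.inl a)) from rfl,
      map_sum]
    refine Finset.sum_congr rfl fun i hi => ?_
    exact hent ⟨i, Finset.mem_range.mp hi⟩ (Sum.inl a) (Sum.inl b)
  have hD : Dᴴ = D := by
    ext a b
    rw [conjTranspose_apply, ← h2 b a, ← h2 a b]
    rw [show (star (∑ i ∈ Finset.range (n + 1), Γ i i (Sum.inr b) (Sum.inr a)) : ℂ)
      = (starRingEnd ℂ) (∑ i ∈ Finset.range (n + 1), Γ i i (Sum.inr b) (Sum.inr a)) from rfl,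
      map_sum]
    refine Finset.sum_congr rfl fun i hi => ?_
    exact hent ⟨i, Finset.mem_range.mp hi⟩ (Sum.inr a) (Sum.inr b)
  show (fromBlocks A B Bᴴ D)ᴴ = fromBlocks A B Bᴴ D
  rw [fromBlocks_conjTranspose, conjTranspose_conjTranspose, hA, hD]

/-- For every `M ≥ 1` and `n ≥ 1`, `A_n` is a closed convex cone in the real vector
space of Hermitian `2M × 2M` complex matrices: it consists of Hermitian matrices, is
closed, and is closed under addition and multiplication by nonnegative real scalars. -/
theorem ASet_isClosed_convexCone (M n : ℕ) (hM : 1 ≤ M) (hn : 1 ≤ n) :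
    IsClosed (ASet M n) ∧
    (∀ ρ ∈ ASet M n, ρ.IsHermitian) ∧
    (∀ ρ ∈ ASet M n, ∀ σ ∈ ASet M n, ρ + σ ∈ ASet M n) ∧
    (∀ c : ℝ, 0 ≤ c → ∀ ρ ∈ ASet M n, (c : ℂ) • ρ ∈ ASet M n) := by
  refine ⟨?_, fun ρ h => aset_mem_isHermitian M n h, ?_, ?_⟩
  · -- closedness
    apply IsSeqClosed.isClosed
    intro ρs ρ hmem htend
    have hherm : ∀ k, (ρs k)ᴴ = ρs k := fun k => aset_mem_isHermitian M n (hmem k)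
    choose A B D hfrom hne using hmem
    choose Γ hΓ using hne
    have hPSD : ∀ k, (GammaSection M n (Γ k)).PosSemidef := fun k => (hΓ k).1
    set X : ℕ → Matrix (Fin (n+1) × (Fin M ⊕ Fin M)) (Fin (n+1) × (Fin M ⊕ Fin M)) ℂ :=
      fun k => GammaSection M n (Γ k) with hXdef
    have hLinE := fun k => (gammaLin_iff M n (A k) (B k) (D k) (Γ k)).mp (hΓ k).2
    have hρt : ∀ u v, Filter.Tendsto (fun k => ρs k u v) Filter.atTop (nhds (ρ u v)) :=
      fun u v => ((continuous_id.matrix_elem u v).tendsto ρ).comp htend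
    -- uniform bound on the diagonal of the `X k`
    set g : (Fin M ⊕ Fin M) → ℝ := fun p => sSup (Set.range fun k => ‖ρs k p p‖) with hg
    have hbdd : ∀ p, BddAbove (Set.range fun k => ‖ρs k p p‖) := fun p =>
      ((hρt p p).norm).bddAbove_range
    have hg0 : ∀ p, 0 ≤ g p := fun p =>
      le_trans (norm_nonneg _) (le_csSup (hbdd p) ⟨0, rfl⟩)
    set T : ℝ := ∑ p : Fin M ⊕ Fin M, g p with hT
    have hnorm_le : ∀ k p, ‖ρs k p p‖ ≤ T := fun k p =>
      le_trans (le_csSup (hbdd p) ⟨k, rfl⟩)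
        (Finset.single_le_sum (fun q _ => hg0 q) (Finset.mem_univ p))
    have hdiag : ∀ k (u : Fin (n+1) × (Fin M ⊕ Fin M)), (X k u u).re ≤ T := by
      intro k u
      obtain ⟨i, p⟩ := u
      have hnn : ∀ (j : ℕ), j ∈ Finset.range (n+1) → ∀ (q : Fin M ⊕ Fin M),
          0 ≤ (Γ k j j q q).re := by
        intro j hj q
        have := aux_psd_diag_nonneg (hPSD k)
          ((⟨j, Finset.mem_range.mp hj⟩ : Fin (n+1)), q)
        exact (Complex.le_def.mp this).1
      have hXu : X k (i, p) (i, p) = Γ k i.val i.val p p := rfl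
      rw [hXu]
      cases p with
      | inl a =>
        have hsum : ∑ j ∈ Finset.range (n+1), (Γ k j j (Sum.inl a) (Sum.inl a)).re
            = (A k a a).re := by
          rw [← Complex.re_sum, (hLinE k).1 a a]
        have hle : (Γ k i.val i.val (Sum.inl a) (Sum.inl a)).re
            ≤ ∑ j ∈ Finset.range (n+1), (Γ k j j (Sum.inl a) (Sum.inl a)).re :=
          Finset.single_le_sum (fun j hj => hnn j hj (Sum.inl a))
            (Finset.mem_range.mpr i.isLt)
        have hAρ : A k a a = ρs k (Sum.inl a) (Sum.inl a) := by rw [hfrom k]; rfl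
        have : (A k a a).re ≤ ‖ρs k (Sum.inl a) (Sum.inl a)‖ := by
          rw [hAρ]
          exact Complex.re_le_norm _
        calc (Γ k i.val i.val (Sum.inl a) (Sum.inl a)).re
            ≤ (A k a a).re := by rw [← hsum]; exact hle
          _ ≤ ‖ρs k (Sum.inl a) (Sum.inl a)‖ := this
          _ ≤ T := hnorm_le k _
      | inr a =>
        have hsum : ∑ j ∈ Finset.range (n+1), (Γ k j j (Sum.inr a) (Sum.inr a)).re
            = (D k a a).re := by
          rw [← Complex.re_sum, (hLinE k).2.1 a a]
        have hle : (Γ k i.val i.val (Sum.inr a) (Sum.inr a)).re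
            ≤ ∑ j ∈ Finset.range (n+1), (Γ k j j (Sum.inr a) (Sum.inr a)).re :=
          Finset.single_le_sum (fun j hj => hnn j hj (Sum.inr a))
            (Finset.mem_range.mpr i.isLt)
        have hAρ : D k a a = ρs k (Sum.inr a) (Sum.inr a) := by rw [hfrom k]; rfl
        have : (D k a a).re ≤ ‖ρs k (Sum.inr a) (Sum.inr a)‖ := by
          rw [hAρ]
          exact Complex.re_le_norm _
        calc (Γ k i.val i.val (Sum.inr a) (Sum.inr a)).re
            ≤ (D k a a).re := by rw [← hsum]; exact hle
          _ ≤ ‖ρs k (Sum.inr a) (Sum.inr a)‖ := this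
          _ ≤ T := hnorm_le k _
    have hmemK : ∀ k, X k ∈ {Y : Matrix (Fin (n+1) × (Fin M ⊕ Fin M))
        (Fin (n+1) × (Fin M ⊕ Fin M)) ℂ | ∀ u v, ‖Y u v‖ ≤ T + T} := fun k u v =>
      le_trans (aux_psd_entry_norm_le (hPSD k) u v) (add_le_add (hdiag k u) (hdiag k v))
    obtain ⟨Y, hYK, φ, hφ, hYt⟩ := (aux_compact_entries (T + T)).tendsto_subseq hmemK
    have hXe : ∀ u v, Filter.Tendsto (fun k => X (φ k) u v) Filter.atTop (nhds (Y u v)) :=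
      fun u v => ((continuous_id.matrix_elem u v).tendsto Y).comp hYt
    have hρφ : ∀ u v, Filter.Tendsto (fun k => ρs (φ k) u v) Filter.atTop (nhds (ρ u v)) :=
      fun u v => (hρt u v).comp hφ.tendsto_atTop
    -- ρ is Hermitian
    have hρH : ρᴴ = ρ := by
      have h1 : Filter.Tendsto (fun k => (ρs k)ᴴ) Filter.atTop (nhds ρᴴ) :=
        (continuous_id.matrix_conjTranspose.tendsto ρ).comp htend
      rw [funext hherm] at h1
      exact tendsto_nhds_unique h1 htend
    -- Y is positive semidefinite
    have hYpsd : Y.PosSemidef := by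
      refine PosSemidef.of_dotProduct_mulVec_nonneg ?_ ?_
      · have h1 : Filter.Tendsto (fun k => (X (φ k))ᴴ) Filter.atTop (nhds Yᴴ) :=
          (continuous_id.matrix_conjTranspose.tendsto Y).comp hYt
        rw [funext (fun k => ((hPSD (φ k)).1 : (X (φ k))ᴴ = X (φ k)))] at h1
        exact tendsto_nhds_unique h1 hYt
      · intro x
        have hc : Continuous fun Z : Matrix (Fin (n+1) × (Fin M ⊕ Fin M))
            (Fin (n+1) × (Fin M ⊕ Fin M)) ℂ => star x ⬝ᵥ Z *ᵥ x :=
          continuous_const.dotProduct (continuous_id.matrix_mulVec continuous_const)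
        exact aux_complex_nonneg_of_tendsto ((hc.tendsto Y).comp hYt)
          (fun k => (hPSD (φ k)).dotProduct_mulVec_nonneg x)
    -- assemble the limit witness
    have h21 : ρ.toBlocks₂₁ = ρ.toBlocks₁₂ᴴ := by
      ext a b
      have := congrFun (congrFun hρH (Sum.inr a)) (Sum.inl b)
      simpa [conjTranspose_apply, Matrix.toBlocks₂₁, Matrix.toBlocks₁₂] using this.symm
    set e : ℕ → Fin (n+1) := fun i => ⟨min i n, by omega⟩ with he
    have heval : ∀ i, i ≤ n → (e i : ℕ) = i := by
      intro i hi; simp [he, Nat.min_eq_left hi]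
    set Γlim : ℕ → ℕ → Matrix (Fin M ⊕ Fin M) (Fin M ⊕ Fin M) ℂ :=
      fun i j => Matrix.of fun p q => Y (e i, p) (e j, q) with hΓlim
    have hGS : GammaSection M n Γlim = Y := by
      ext u v
      obtain ⟨i, p⟩ := u; obtain ⟨j, q⟩ := v
      show Y (e i.val, p) (e j.val, q) = Y (i, p) (j, q)
      have h1 : e i.val = i := Fin.ext (heval i.val (Nat.lt_succ_iff.mp i.isLt))
      have h2 : e j.val = j := Fin.ext (heval j.val (Nat.lt_succ_iff.mp j.isLt))
      rw [h1, h2]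
    have hXent : ∀ (k : ℕ) (i j : ℕ), i ≤ n → j ≤ n → ∀ p q,
        X k (e i, p) (e j, q) = Γ k i j p q := by
      intro k i j hi hj p q
      show Γ k (e i).val (e j).val p q = Γ k i j p q
      rw [heval i hi, heval j hj]
    refine ⟨ρ.toBlocks₁₁, ρ.toBlocks₁₂, ρ.toBlocks₂₂, ?_, Γlim, ?_, ?_⟩
    · rw [← h21]; exact (fromBlocks_toBlocks ρ).symm
    · rw [hGS]; exact hYpsd
    · rw [gammaLin_iff]
      refine ⟨fun a b => ?_, fun a b => ?_, fun a b => ?_, fun a b => ?_,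
        fun κ hκ1 hκn a b => ?_⟩
      · -- (i)
        have hl : Filter.Tendsto
            (fun k => ∑ i ∈ Finset.range (n+1), X (φ k) (e i, Sum.inl a) (e i, Sum.inl b))
            Filter.atTop
            (nhds (∑ i ∈ Finset.range (n+1), Y (e i, Sum.inl a) (e i, Sum.inl b))) :=
          tendsto_finset_sum _ (fun i _ => hXe (e i, Sum.inl a) (e i, Sum.inl b))
        have hr : (fun k => ∑ i ∈ Finset.range (n+1), X (φ k) (e i, Sum.inl a) (e i, Sum.inl b))
            = fun k => ρs (φ k) (Sum.inl a) (Sum.inl b) := by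
          funext k
          rw [Finset.sum_congr rfl (fun i hi =>
            hXent (φ k) i i (Nat.lt_succ_iff.mp (Finset.mem_range.mp hi))
              (Nat.lt_succ_iff.mp (Finset.mem_range.mp hi)) (Sum.inl a) (Sum.inl b)),
            (hLinE (φ k)).1 a b, hfrom (φ k)]
          rfl
        rw [hr] at hl
        exact tendsto_nhds_unique hl (hρφ (Sum.inl a) (Sum.inl b))
      · -- (ii)
        have hl : Filter.Tendsto
            (fun k => ∑ i ∈ Finset.range (n+1), X (φ k) (e i, Sum.inr a) (e i, Sum.inr b))
            Filter.atTop
            (nhds (∑ i ∈ Finset.range (n+1), Y (e i, Sum.inr a) (e i, Sum.inr b))) :=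
          tendsto_finset_sum _ (fun i _ => hXe (e i, Sum.inr a) (e i, Sum.inr b))
        have hr : (fun k => ∑ i ∈ Finset.range (n+1), X (φ k) (e i, Sum.inr a) (e i, Sum.inr b))
            = fun k => ρs (φ k) (Sum.inr a) (Sum.inr b) := by
          funext k
          rw [Finset.sum_congr rfl (fun i hi =>
            hXent (φ k) i i (Nat.lt_succ_iff.mp (Finset.mem_range.mp hi))
              (Nat.lt_succ_iff.mp (Finset.mem_range.mp hi)) (Sum.inr a) (Sum.inr b)),
            (hLinE (φ k)).2.1 a b, hfrom (φ k)]
          rfl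
        rw [hr] at hl
        exact tendsto_nhds_unique hl (hρφ (Sum.inr a) (Sum.inr b))
      · -- (iii)
        have hl : Filter.Tendsto
            (fun k => ∑ i ∈ Finset.range n, (1/2 : ℂ) *
              (X (φ k) (e i, Sum.inr a) (e (i+1), Sum.inl b)
                + X (φ k) (e i, Sum.inl a) (e (i+1), Sum.inr b)))
            Filter.atTop
            (nhds (∑ i ∈ Finset.range n, (1/2 : ℂ) *
              (Y (e i, Sum.inr a) (e (i+1), Sum.inl b)
                + Y (e i, Sum.inl a) (e (i+1), Sum.inr b)))) :=
          tendsto_finset_sum _ (fun i _ =>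
            ((hXe (e i, Sum.inr a) (e (i+1), Sum.inl b)).add
              (hXe (e i, Sum.inl a) (e (i+1), Sum.inr b))).const_mul _)
        have hr : (fun k => ∑ i ∈ Finset.range n, (1/2 : ℂ) *
              (X (φ k) (e i, Sum.inr a) (e (i+1), Sum.inl b)
                + X (φ k) (e i, Sum.inl a) (e (i+1), Sum.inr b)))
            = fun k => ρs (φ k) (Sum.inl a) (Sum.inr b) := by
          funext k
          have hcg : ∀ i ∈ Finset.range n, (1/2 : ℂ) *
              (X (φ k) (e i, Sum.inr a) (e (i+1), Sum.inl b)
                + X (φ k) (e i, Sum.inl a) (e (i+1), Sum.inr b))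
              = (1/2 : ℂ) * (Γ (φ k) i (i+1) (Sum.inr a) (Sum.inl b)
                + Γ (φ k) i (i+1) (Sum.inl a) (Sum.inr b)) := by
            intro i hi
            have hi' : i < n := Finset.mem_range.mp hi
            rw [hXent (φ k) i (i+1) (by omega) (by omega),
              hXent (φ k) i (i+1) (by omega) (by omega)]
          rw [Finset.sum_congr rfl hcg, (hLinE (φ k)).2.2.1 a b, hfrom (φ k)]
          rfl
        rw [hr] at hl
        exact tendsto_nhds_unique hl (hρφ (Sum.inl a) (Sum.inr b))
      · -- (iv)
        have hl : Filter.Tendsto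
            (fun k => ∑ i ∈ Finset.range (n+1),
              (X (φ k) (e i, Sum.inr a) (e i, Sum.inl b)
                - X (φ k) (e i, Sum.inl a) (e i, Sum.inr b)))
            Filter.atTop
            (nhds (∑ i ∈ Finset.range (n+1),
              (Y (e i, Sum.inr a) (e i, Sum.inl b) - Y (e i, Sum.inl a) (e i, Sum.inr b)))) :=
          tendsto_finset_sum _ (fun i _ =>
            (hXe (e i, Sum.inr a) (e i, Sum.inl b)).sub (hXe (e i, Sum.inl a) (e i, Sum.inr b)))
        have hr : (fun k => ∑ i ∈ Finset.range (n+1),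
              (X (φ k) (e i, Sum.inr a) (e i, Sum.inl b)
                - X (φ k) (e i, Sum.inl a) (e i, Sum.inr b)))
            = fun _ => (0 : ℂ) := by
          funext k
          have hcg : ∀ i ∈ Finset.range (n+1),
              (X (φ k) (e i, Sum.inr a) (e i, Sum.inl b)
                - X (φ k) (e i, Sum.inl a) (e i, Sum.inr b))
              = (Γ (φ k) i i (Sum.inr a) (Sum.inl b) - Γ (φ k) i i (Sum.inl a) (Sum.inr b)) := by
            intro i hi
            have hi' : i ≤ n := Nat.lt_succ_iff.mp (Finset.mem_range.mp hi)
            rw [hXent (φ k) i i hi' hi', hXent (φ k) i i hi' hi']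
          rw [Finset.sum_congr rfl hcg, (hLinE (φ k)).2.2.2.1 a b]
        rw [hr] at hl
        exact tendsto_nhds_unique hl tendsto_const_nhds
      · -- (v)
        have hl : Filter.Tendsto
            (fun k => ∑ i ∈ Finset.range (n+1-κ),
              (X (φ k) (e i, Sum.inr a) (e (i+κ), Sum.inl b)
                - X (φ k) (e i, Sum.inl a) (e (i+κ), Sum.inr b)))
            Filter.atTop
            (nhds (∑ i ∈ Finset.range (n+1-κ),
              (Y (e i, Sum.inr a) (e (i+κ), Sum.inl b)
                - Y (e i, Sum.inl a) (e (i+κ), Sum.inr b)))) :=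
          tendsto_finset_sum _ (fun i _ =>
            (hXe (e i, Sum.inr a) (e (i+κ), Sum.inl b)).sub
              (hXe (e i, Sum.inl a) (e (i+κ), Sum.inr b)))
        have hr : (fun k => ∑ i ∈ Finset.range (n+1-κ),
              (X (φ k) (e i, Sum.inr a) (e (i+κ), Sum.inl b)
                - X (φ k) (e i, Sum.inl a) (e (i+κ), Sum.inr b)))
            = fun _ => (0 : ℂ) := by
          funext k
          have hcg : ∀ i ∈ Finset.range (n+1-κ),
              (X (φ k) (e i, Sum.inr a) (e (i+κ), Sum.inl b)
                - X (φ k) (e i, Sum.inl a) (e (i+κ), Sum.inr b))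
              = (Γ (φ k) i (i+κ) (Sum.inr a) (Sum.inl b)
                - Γ (φ k) i (i+κ) (Sum.inl a) (Sum.inr b)) := by
            intro i hi
            have hi' : i < n + 1 - κ := Finset.mem_range.mp hi
            rw [hXent (φ k) i (i+κ) (by omega) (by omega),
              hXent (φ k) i (i+κ) (by omega) (by omega)]
          rw [Finset.sum_congr rfl hcg, (hLinE (φ k)).2.2.2.2 κ hκ1 hκn a b]
        rw [hr] at hl
        exact tendsto_nhds_unique hl tendsto_const_nhds
  · -- addition
    rintro ρ ⟨A, B, D, rfl, Γ, hP, hL⟩ σ ⟨A', B', D', rfl, Γ', hP', hL'⟩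
    refine ⟨A + A', B + B', D + D', ?_, Γ + Γ', ?_, ?_⟩
    · rw [fromBlocks_add, conjTranspose_add]
    · have hgs : GammaSection M n (Γ + Γ') = GammaSection M n Γ + GammaSection M n Γ' := rfl
      rw [hgs]; exact hP.add hP'
    · have he : ∀ i j p q, (Γ + Γ') i j p q = Γ i j p q + Γ' i j p q := fun _ _ _ _ => rfl
      rw [gammaLin_iff] at hL hL' ⊢
      obtain ⟨h1, h2, h3, h4, h5⟩ := hL
      obtain ⟨h1', h2', h3', h4', h5'⟩ := hL'
      refine ⟨fun a b => ?_, fun a b => ?_, fun a b => ?_, fun a b => ?_,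
        fun k hk1 hk2 a b => ?_⟩
      · rw [Matrix.add_apply, ← h1 a b, ← h1' a b, ← Finset.sum_add_distrib]
        exact Finset.sum_congr rfl fun i _ => he i i _ _
      · rw [Matrix.add_apply, ← h2 a b, ← h2' a b, ← Finset.sum_add_distrib]
        exact Finset.sum_congr rfl fun i _ => he i i _ _
      · rw [Matrix.add_apply, ← h3 a b, ← h3' a b, ← Finset.sum_add_distrib]
        refine Finset.sum_congr rfl fun i _ => ?_
        simp only [he]; ring
      · have hsplit : ∑ i ∈ Finset.range (n+1),
            ((Γ + Γ') i i (Sum.inr a) (Sum.inl b) - (Γ + Γ') i i (Sum.inl a) (Sum.inr b))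
            = (∑ i ∈ Finset.range (n+1),
                (Γ i i (Sum.inr a) (Sum.inl b) - Γ i i (Sum.inl a) (Sum.inr b)))
              + (∑ i ∈ Finset.range (n+1),
                (Γ' i i (Sum.inr a) (Sum.inl b) - Γ' i i (Sum.inl a) (Sum.inr b))) := by
          rw [← Finset.sum_add_distrib]
          refine Finset.sum_congr rfl fun i _ => ?_
          simp only [he]; ring
        rw [hsplit, h4 a b, h4' a b, add_zero]
      · have hsplit : ∑ i ∈ Finset.range (n+1-k),
            ((Γ + Γ') i (i+k) (Sum.inr a) (Sum.inl b) - (Γ + Γ') i (i+k) (Sum.inl a) (Sum.inr b))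
            = (∑ i ∈ Finset.range (n+1-k),
                (Γ i (i+k) (Sum.inr a) (Sum.inl b) - Γ i (i+k) (Sum.inl a) (Sum.inr b)))
              + (∑ i ∈ Finset.range (n+1-k),
                (Γ' i (i+k) (Sum.inr a) (Sum.inl b) - Γ' i (i+k) (Sum.inl a) (Sum.inr b))) := by
          rw [← Finset.sum_add_distrib]
          refine Finset.sum_congr rfl fun i _ => ?_
          simp only [he]; ring
        rw [hsplit, h5 k hk1 hk2 a b, h5' k hk1 hk2 a b, add_zero]
  · -- scalar multiplication
    rintro c hc ρ ⟨A, B, D, rfl, Γ, hP, hL⟩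
    have hcc : star (c:ℂ) = (c:ℂ) := Complex.conj_ofReal c
    refine ⟨(c:ℂ) • A, (c:ℂ) • B, (c:ℂ) • D, ?_, (c:ℂ) • Γ, ?_, ?_⟩
    · rw [fromBlocks_smul, conjTranspose_smul, hcc]
    · have hgs : GammaSection M n ((c:ℂ) • Γ) = (c:ℂ) • GammaSection M n Γ := rfl
      rw [hgs]
      refine PosSemidef.of_dotProduct_mulVec_nonneg ?_ ?_
      · show ((c:ℂ) • GammaSection M n Γ)ᴴ = (c:ℂ) • GammaSection M n Γ
        rw [conjTranspose_smul, hcc, hP.1]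
      · intro x
        rw [smul_mulVec, dotProduct_smul, smul_eq_mul]
        exact mul_nonneg (by exact_mod_cast hc) (hP.dotProduct_mulVec_nonneg x)
    · have he : ∀ i j p q, ((c:ℂ) • Γ) i j p q = (c:ℂ) * Γ i j p q := fun _ _ _ _ => rfl
      rw [gammaLin_iff] at hL ⊢
      obtain ⟨h1, h2, h3, h4, h5⟩ := hL
      refine ⟨fun a b => ?_, fun a b => ?_, fun a b => ?_, fun a b => ?_,
        fun k hk1 hk2 a b => ?_⟩
      · rw [Matrix.smul_apply, smul_eq_mul, ← h1 a b, Finset.mul_sum]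
        exact Finset.sum_congr rfl fun i _ => he i i _ _
      · rw [Matrix.smul_apply, smul_eq_mul, ← h2 a b, Finset.mul_sum]
        exact Finset.sum_congr rfl fun i _ => he i i _ _
      · rw [Matrix.smul_apply, smul_eq_mul, ← h3 a b, Finset.mul_sum]
        refine Finset.sum_congr rfl fun i _ => ?_
        simp only [he]; ring
      · have hsplit : ∑ i ∈ Finset.range (n+1),
            (((c:ℂ) • Γ) i i (Sum.inr a) (Sum.inl b) - ((c:ℂ) • Γ) i i (Sum.inl a) (Sum.inr b))
            = (c:ℂ) * ∑ i ∈ Finset.range (n+1),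
                (Γ i i (Sum.inr a) (Sum.inl b) - Γ i i (Sum.inl a) (Sum.inr b)) := by
          rw [Finset.mul_sum]
          refine Finset.sum_congr rfl fun i _ => ?_
          simp only [he]; ring
        rw [hsplit, h4 a b, mul_zero]
      · have hsplit : ∑ i ∈ Finset.range (n+1-k),
            (((c:ℂ) • Γ) i (i+k) (Sum.inr a) (Sum.inl b)
              - ((c:ℂ) • Γ) i (i+k) (Sum.inl a) (Sum.inr b))
            = (c:ℂ) * ∑ i ∈ Finset.range (n+1-k),
                (Γ i (i+k) (Sum.inr a) (Sum.inl b) - Γ i (i+k) (Sum.inl a) (Sum.inr b)) := by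
          rw [Finset.mul_sum]
          refine Finset.sum_congr rfl fun i _ => ?_
          simp only [he]; ring
        rw [hsplit, h5 k hk1 hk2 a b, mul_zero]
end
end

section
/- Let S, T ∈ M_M(ℂ) with T Hermitian. Then z^{-1} S† + T + z S ≥ 0 for all z ∈ ℂ with |z| = 1 if and only if for every n ≥ 0 the (n+1)×(n+1) block Toeplitz matrix whose (i,j) block (0 ≤ i, j ≤ n) equals T if i = j, S if i = j + 1, S† if j = i + 1, and 0 if |i − j| ≥ 2, is positive semidefinite. -/
open Matrix
open scoped ComplexOrder

lemma sum_zpow_prim {N : ℕ} {ω : ℂ} (hω : IsPrimitiveRoot ω N) (m : ℤ) :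
    ∑ k ∈ Finset.range N, ω ^ ((k : ℤ) * m) = if (N:ℤ) ∣ m then (N:ℂ) else 0 := by
  by_cases hd : (N:ℤ) ∣ m
  · rw [if_pos hd]
    rw [Finset.sum_congr rfl (fun k _ => (hω.zpow_eq_one_iff_dvd _).mpr (hd.mul_left _))]
    simp
  · rw [if_neg hd]
    have h1 : (ω ^ m) ≠ 1 := fun h => hd ((hω.zpow_eq_one_iff_dvd m).mp h)
    rw [Finset.sum_congr rfl (fun k _ => by rw [mul_comm, _root_.zpow_mul, zpow_natCast]),
      geom_sum_eq h1]
    have h2 : (ω ^ m) ^ N = 1 := by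
      rw [← zpow_natCast (ω ^ m), ← _root_.zpow_mul, mul_comm, _root_.zpow_mul, zpow_natCast,
        hω.pow_eq_one, _root_.one_zpow]
    rw [h2]; simp

lemma posSemidef_real_smul {m : Type*} [Fintype m] {A : Matrix m m ℂ} (hA : A.PosSemidef)
    {c : ℝ} (hc : 0 ≤ c) : ((c:ℂ) • A).PosSemidef := by
  refine PosSemidef.of_dotProduct_mulVec_nonneg ?_ ?_
  · unfold Matrix.IsHermitian
    rw [conjTranspose_smul, hA.1.eq]
    congr 1
    simp [Complex.conj_ofReal]
  · intro x
    rw [smul_mulVec, dotProduct_smul, smul_eq_mul]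
    exact mul_nonneg (by exact_mod_cast hc) (hA.dotProduct_mulVec_nonneg x)

lemma double_split (m : ℕ) (g : ℕ → ℕ → ℂ) :
    ∑ p : Fin (m+1), ∑ q : Fin (m+1), g p.val q.val
    = (∑ p : Fin m, ∑ q : Fin m, g p.val q.val) + (∑ p : Fin m, g p.val m)
      + (∑ q : Fin m, g m q.val) + g m m := by
  have inner : ∀ pv : ℕ, ∑ q : Fin (m+1), g pv q.val = (∑ q : Fin m, g pv q.val) + g pv m := by
    intro pv
    rw [Fin.sum_univ_castSucc]
    simp
  rw [Finset.sum_congr rfl (fun p _ => inner p.val), Finset.sum_add_distrib,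
    Fin.sum_univ_castSucc (f := fun p : Fin (m+1) => ∑ q : Fin m, g p.val q.val),
    Fin.sum_univ_castSucc (f := fun p : Fin (m+1) => g p.val m)]
  simp only [Fin.coe_castSucc, Fin.val_last]
  ring

lemma quad_sum (z t s : ℂ) (hz1 : z * (starRingEnd ℂ) z = 1) (n : ℕ) :
    ∑ p : Fin (n+1), ∑ q : Fin (n+1), z ^ (p.val) * ((starRingEnd ℂ) z) ^ (q.val) *
      (if p.val = q.val then t else if p.val = q.val + 1 then s
        else if q.val = p.val + 1 then (starRingEnd ℂ) s else 0)
    = ((n:ℂ)+1) * t + (n:ℂ) * (z * s + (starRingEnd ℂ) z * (starRingEnd ℂ) s) := by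
  set w := (starRingEnd ℂ) z with hw
  set cs := (starRingEnd ℂ) s with hcs
  have hpow : ∀ m : ℕ, z ^ m * w ^ m = 1 := by
    intro m; rw [← mul_pow, hz1, one_pow]
  induction n with
  | zero => simp
  | succ n ih =>
    rw [double_split (n+1) (fun a b => z ^ a * w ^ b *
      (if a = b then t else if a = b + 1 then s else if b = a + 1 then cs else 0))]
    rw [ih]
    have h2 : (∑ p : Fin (n+1), z ^ (p.val) * w ^ (n+1) *
        (if p.val = n + 1 then t else if p.val = (n+1) + 1 then s
          else if n + 1 = p.val + 1 then cs else 0)) = z ^ n * w ^ (n+1) * cs := by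
      rw [Finset.sum_eq_single (Fin.last n)]
      · have ha : ¬ (n = n+1) := by omega
        have hb : ¬ (n = n+2) := by omega
        simp [ha, hb]
      · intro b _ hb
        have hbn : b.val ≠ n := fun hh => hb (Fin.ext (by simp [hh]))
        have h1 : ¬ b.val = n + 1 := by omega
        have hh2 : ¬ b.val = n + 2 := by omega
        have h3 : ¬ n + 1 = b.val + 1 := by omega
        simp [h1, hh2, h3, Ne.symm hbn]
      · simp
    have h3 : (∑ q : Fin (n+1), z ^ (n+1) * w ^ (q.val) *
        (if n + 1 = q.val then t else if n + 1 = q.val + 1 then s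
          else if q.val = (n+1) + 1 then cs else 0)) = z ^ (n+1) * w ^ n * s := by
      rw [Finset.sum_eq_single (Fin.last n)]
      · have ha : ¬ (n + 1 = n) := by omega
        have hb : ¬ (n = n+2) := by omega
        simp [ha, hb]
      · intro b _ hb
        have hbn : b.val ≠ n := fun hh => hb (Fin.ext (by simp [hh]))
        have h1 : ¬ n + 1 = b.val := by omega
        have hh2 : ¬ n + 1 = b.val + 1 := by omega
        have h3 : ¬ b.val = n + 2 := by omega
        simp [h1, hh2, h3, Ne.symm hbn]
      · simp
    rw [h2, h3]
    simp only [if_pos rfl]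
    push_cast
    have e1 := hpow n
    have e2 := hpow (n+1)
    push_cast at e2
    linear_combination (w * cs + z * s) * e1 + t * e2

noncomputable section

/-- The condition `|z|² P + z Q + z̄ Qᴴ + R ≥ 0` for all `z ∈ ℂ`. -/
def QuadPos (M : ℕ) (P Q R : Matrix (Fin M) (Fin M) ℂ) : Prop :=
  ∀ z : ℂ,
    ((z * (starRingEnd ℂ) z) • P + z • Q + ((starRingEnd ℂ) z) • Qᴴ + R).PosSemidef

/-- The `(n+1) × (n+1)` block Toeplitz matrix with diagonal blocks `T`, blocks `S` at
`(i, j)` with `i = j + 1`, blocks `Sᴴ` at `(i, j)` with `j = i + 1`, and zero blocks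
whenever `|i − j| ≥ 2`. -/
def ToeplitzSection (M n : ℕ) (T S : Matrix (Fin M) (Fin M) ℂ) :
    Matrix (Fin (n + 1) × Fin M) (Fin (n + 1) × Fin M) ℂ :=
  Matrix.of fun p q =>
    (if p.1.val = q.1.val then T
     else if p.1.val = q.1.val + 1 then S
     else if q.1.val = p.1.val + 1 then Sᴴ
     else 0) p.2 q.2

lemma dot_block (M n : ℕ) (T S : Matrix (Fin M) (Fin M) ℂ)
    (w : Fin (n+1) → ℂ) (v : Fin M → ℂ) :
    star (fun pi : Fin (n+1) × Fin M => w pi.1 * v pi.2) ⬝ᵥ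
      (ToeplitzSection M n T S *ᵥ fun pi => w pi.1 * v pi.2)
    = ∑ p : Fin (n+1), ∑ q : Fin (n+1), star (w p) * w q *
        (star v ⬝ᵥ ((if p.val = q.val then T else if p.val = q.val + 1 then S
          else if q.val = p.val + 1 then Sᴴ else 0) *ᵥ v)) := by
  simp only [dotProduct, mulVec, Fintype.sum_prod_type, ToeplitzSection, of_apply,
    Pi.star_apply, star_mul', ite_apply, Matrix.zero_apply, dotProduct]
  refine Finset.sum_congr rfl fun p _ => ?_
  simp only [Finset.mul_sum]
  rw [Finset.sum_comm]
  refine Finset.sum_congr rfl fun q _ => Finset.sum_congr rfl fun i _ =>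
    Finset.sum_congr rfl fun j _ => ?_
  split_ifs <;> ring

/-- `z⁻¹ Sᴴ + T + z S ≥ 0` for all `z` on the unit circle iff every finite section of
the associated semi-infinite block Toeplitz operator is positive semidefinite. -/
theorem trigPoly_posSemidef_iff_toeplitz (M : ℕ) (S T : Matrix (Fin M) (Fin M) ℂ)
    (hT : T.IsHermitian) :
    (∀ z : ℂ, ‖z‖ = 1 → (z⁻¹ • Sᴴ + T + z • S).PosSemidef) ↔
      ∀ n : ℕ, (ToeplitzSection M n T S).PosSemidef := by
  constructor
  · intro h n
    set N : ℕ := n + 2 with hNdef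
    have hN0 : N ≠ 0 := by omega
    set ω : ℂ := Complex.exp (2 * Real.pi * Complex.I / N) with hωdef
    have hprim : IsPrimitiveRoot ω N := Complex.isPrimitiveRoot_exp N hN0
    have hnorm : ‖ω‖ = 1 := hprim.norm'_eq_one hN0
    have hω0 : ω ≠ 0 := fun h0 => by simp [h0] at hnorm
    have hconj : (starRingEnd ℂ) ω = ω⁻¹ := (Complex.inv_eq_conj hnorm).symm
    set A : ℕ → Matrix (Fin M) (Fin (n+1) × Fin M) ℂ :=
      fun k => Matrix.of fun i q => if q.2 = i then ω ^ ((k : ℤ) * q.1.val) else 0 with hA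
    have key : ToeplitzSection M n T S
        = ((N : ℂ))⁻¹ • ∑ k ∈ Finset.range N,
            (A k)ᴴ * ((ω^k)⁻¹ • Sᴴ + T + (ω^k) • S) * (A k) := by
      ext ⟨p, i⟩ ⟨q, j⟩
      have hsummand : ∀ k, ((A k)ᴴ * ((ω^k)⁻¹ • Sᴴ + T + (ω^k) • S) * (A k)) (p, i) (q, j)
          = ω ^ ((k:ℤ) * ((q.val:ℤ) - p.val - 1)) * Sᴴ i j
            + ω ^ ((k:ℤ) * ((q.val:ℤ) - p.val)) * T i j
            + ω ^ ((k:ℤ) * ((q.val:ℤ) - p.val + 1)) * S i j := by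
        intro k
        have hentry : ((A k)ᴴ * ((ω^k)⁻¹ • Sᴴ + T + (ω^k) • S) * (A k)) (p, i) (q, j)
            = (starRingEnd ℂ) (ω ^ ((k:ℤ) * p.val))
              * ((ω^k)⁻¹ * Sᴴ i j + T i j + ω^k * S i j) * ω ^ ((k:ℤ) * q.val) := by
          simp [Matrix.mul_apply, hA, conjTranspose_apply, ite_mul, mul_ite, mul_zero, zero_mul,
            Finset.sum_ite_eq, Finset.sum_ite_eq', Matrix.add_apply, Matrix.smul_apply, smul_eq_mul,
            apply_ite (starRingEnd ℂ)]
        rw [hentry, map_zpow₀, hconj, _root_.inv_zpow, ← _root_.zpow_neg, ← zpow_natCast ω k,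
          ← _root_.zpow_neg]
        have hc1 : ∀ (a b c : ℤ) (X : ℂ), ω ^ a * (ω ^ b * X) * ω ^ c = ω ^ (a + b + c) * X := by
          intro a b c X
          rw [zpow_add₀ hω0, zpow_add₀ hω0]; ring
        have hc2 : ∀ (a c : ℤ) (X : ℂ), ω ^ a * X * ω ^ c = ω ^ (a + c) * X := by
          intro a c X
          rw [zpow_add₀ hω0]; ring
        rw [mul_add, mul_add, add_mul, add_mul, hc1, hc2, hc1]
        rw [show (-((k:ℤ) * p.val) + -(k:ℤ) + (k:ℤ) * q.val) = (k:ℤ) * ((q.val:ℤ) - p.val - 1) by ring]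
        rw [show (-((k:ℤ) * p.val) + (k:ℤ) * q.val) = (k:ℤ) * ((q.val:ℤ) - p.val) by ring]
        rw [show (-((k:ℤ) * p.val) + (k:ℤ) + (k:ℤ) * q.val) = (k:ℤ) * ((q.val:ℤ) - p.val + 1) by ring]
      have hRHS : (((N : ℂ))⁻¹ • ∑ k ∈ Finset.range N,
            (A k)ᴴ * ((ω^k)⁻¹ • Sᴴ + T + (ω^k) • S) * (A k)) (p, i) (q, j)
          = (N:ℂ)⁻¹ * ((if (N:ℤ) ∣ ((q.val:ℤ) - p.val - 1) then (N:ℂ) else 0) * Sᴴ i j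
            + (if (N:ℤ) ∣ ((q.val:ℤ) - p.val) then (N:ℂ) else 0) * T i j
            + (if (N:ℤ) ∣ ((q.val:ℤ) - p.val + 1) then (N:ℂ) else 0) * S i j) := by
        rw [Matrix.smul_apply, smul_eq_mul, Matrix.sum_apply]
        congr 1
        rw [Finset.sum_congr rfl (fun k _ => hsummand k), Finset.sum_add_distrib,
          Finset.sum_add_distrib, ← Finset.sum_mul, ← Finset.sum_mul, ← Finset.sum_mul,
          sum_zpow_prim hprim, sum_zpow_prim hprim, sum_zpow_prim hprim]
      rw [hRHS]
      have hNC : (N:ℂ) ≠ 0 := Nat.cast_ne_zero.mpr hN0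
      have hp : p.val ≤ n := Nat.lt_succ_iff.mp p.isLt
      have hq : q.val ≤ n := Nat.lt_succ_iff.mp q.isLt
      have hd1 : ((N:ℤ) ∣ ((q.val:ℤ) - p.val - 1)) ↔ q.val = p.val + 1 := by
        constructor
        · intro hdvd
          have h0 := Int.eq_zero_of_abs_lt_dvd hdvd (by rw [abs_lt]; constructor <;> omega)
          omega
        · intro he; exact ⟨0, by omega⟩
      have hd2 : ((N:ℤ) ∣ ((q.val:ℤ) - p.val)) ↔ p.val = q.val := by
        constructor
        · intro hdvd
          have h0 := Int.eq_zero_of_abs_lt_dvd hdvd (by rw [abs_lt]; constructor <;> omega)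
          omega
        · intro he; exact ⟨0, by omega⟩
      have hd3 : ((N:ℤ) ∣ ((q.val:ℤ) - p.val + 1)) ↔ p.val = q.val + 1 := by
        constructor
        · intro hdvd
          have h0 := Int.eq_zero_of_abs_lt_dvd hdvd (by rw [abs_lt]; constructor <;> omega)
          omega
        · intro he; exact ⟨0, by omega⟩
      simp only [ToeplitzSection, of_apply, hd1, hd2, hd3]
      split_ifs <;> (try omega) <;> (try (simp only [Matrix.zero_apply]; field_simp)) <;> simp [hNC]
    rw [key]
    have hcast : ((N:ℂ))⁻¹ = (((N:ℝ)⁻¹ : ℝ) : ℂ) := by push_cast; ring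
    rw [hcast]
    refine posSemidef_real_smul ?_ (by positivity)
    refine Finset.sum_induction _ _ (fun a b ha hb => ha.add hb) Matrix.PosSemidef.zero ?_
    intro k _
    have hknorm : ‖ω^k‖ = 1 := by rw [norm_pow, hnorm, one_pow]
    exact (h (ω^k) hknorm).conjTranspose_mul_mul_same (A k)
  · intro h z hz
    have hzc : z⁻¹ = (starRingEnd ℂ) z := Complex.inv_eq_conj hz
    have hz1 : z * (starRingEnd ℂ) z = 1 := by
      rw [Complex.mul_conj]
      norm_cast
      simp [Complex.normSq_eq_norm_sq, hz]
    refine PosSemidef.of_dotProduct_mulVec_nonneg ?_ ?_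
    · have hs2 : star z = z⁻¹ := hzc.symm
      have hs1 : star (z⁻¹) = z := by
        rw [star_inv₀, hs2, inv_inv]
      unfold Matrix.IsHermitian
      rw [conjTranspose_add, conjTranspose_add, conjTranspose_smul, conjTranspose_smul,
        conjTranspose_conjTranspose, hT.eq, hs1, hs2]
      abel
    · intro v
      set s := star v ⬝ᵥ (S *ᵥ v) with hs
      set t := star v ⬝ᵥ (T *ᵥ v) with ht
      have hsconj : star v ⬝ᵥ (Sᴴ *ᵥ v) = (starRingEnd ℂ) s := by
        rw [hs]
        simp only [dotProduct, mulVec, conjTranspose_apply, map_sum, _root_.map_mul, Finset.mul_sum,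
          Pi.star_apply, Complex.star_def, Complex.conj_conj, dotProduct]
        rw [Finset.sum_comm]
        refine Finset.sum_congr rfl fun i _ => Finset.sum_congr rfl fun j _ => ?_
        ring
      have key2 : ∀ n : ℕ,
          star (fun pi : Fin (n+1) × Fin M => ((starRingEnd ℂ) z) ^ (pi.1.val) * v pi.2) ⬝ᵥ
            (ToeplitzSection M n T S *ᵥ fun pi => ((starRingEnd ℂ) z) ^ (pi.1.val) * v pi.2)
          = ((n:ℂ)+1) * t + (n:ℂ) * (z * s + (starRingEnd ℂ) z * (starRingEnd ℂ) s) := by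
        intro n
        rw [dot_block M n T S (fun p => ((starRingEnd ℂ) z) ^ (p.val)) v, ← quad_sum z t s hz1 n]
        refine Finset.sum_congr rfl fun p _ => Finset.sum_congr rfl fun q _ => ?_
        have hstar : star (((starRingEnd ℂ) z) ^ (p.val)) = z ^ p.val := by
          rw [star_pow, Complex.star_def, Complex.conj_conj]
        rw [hstar]
        congr 1
        split_ifs with h1 h2 h3
        · exact ht.symm
        · exact hs.symm
        · exact hsconj
        · simp
      have hq : ∀ n : ℕ, 0 ≤ ((n:ℂ)+1) * t + (n:ℂ) * (z * s + (starRingEnd ℂ) z * (starRingEnd ℂ) s) :=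
        fun n => key2 n ▸ (h n).dotProduct_mulVec_nonneg _
      set b := z * s + (starRingEnd ℂ) z * (starRingEnd ℂ) s with hb
      have hbim : b.im = 0 := by
        rw [hb, ← _root_.map_mul]
        simp only [Complex.add_im, Complex.conj_im]
        ring
      have ht0 := hq 0
      rw [Complex.nonneg_iff] at ht0
      have htre : 0 ≤ t.re := by simpa using ht0.1
      have htim : t.im = 0 := by
        have := ht0.2; simp at this; linarith [this]
      have hbre : ∀ n : ℕ, 0 ≤ ((n:ℝ)+1) * t.re + (n:ℝ) * b.re := by
        intro n
        have := (Complex.nonneg_iff.mp (hq n)).1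
        simpa [Complex.add_re, Complex.mul_re, htim, hbim] using this
      have hgoal : star v ⬝ᵥ ((z⁻¹ • Sᴴ + T + z • S) *ᵥ v) = t + b := by
        rw [add_mulVec, add_mulVec, smul_mulVec, smul_mulVec, dotProduct_add,
          dotProduct_add, dotProduct_smul, dotProduct_smul, hsconj, smul_eq_mul, smul_eq_mul, hzc,
          hb]
        ring
      rw [hgoal, Complex.nonneg_iff]
      constructor
      · by_contra hneg
        push_neg at hneg
        rw [Complex.add_re] at hneg
        obtain ⟨n, hn⟩ := exists_nat_gt (t.re / (-(t.re + b.re)))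
        have hlt := (div_lt_iff₀ (by linarith)).mp hn
        have := hbre n
        nlinarith
      · simp [Complex.add_im, htim, hbim]
end
end

section
/- Let P, Q, R ∈ M_M(ℂ). Then |z|² P + z Q + z̄ Q† + R ≥ 0 for all z ∈ ℂ if and only if for every r ∈ ℝ and every n ≥ 0 the (n+1)×(n+1) block Toeplitz matrix whose (i,j) block (0 ≤ i, j ≤ n) equals R + r²P if i = j, rQ if i = j + 1, rQ† if j = i + 1, and 0 if |i − j| ≥ 2, is positive semidefinite. -/
open Matrix
open scoped ComplexOrder

noncomputable section

/-! ### Auxiliary lemmas -/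

lemma root_sum (N : ℕ) (ζ : ℂ) (hζ : ζ ^ N = 1) :
    ∑ j ∈ Finset.range N, ζ ^ j = if ζ = 1 then (N : ℂ) else 0 := by
  split_ifs with h
  · simp [h]
  · rw [geom_sum_eq h, hζ, sub_self, zero_div]

lemma orth (N : ℕ) (hN : N ≠ 0) (i k : ℕ) (hi : i < N) (hk : k < N) :
    ∑ j ∈ Finset.range N,
      ((starRingEnd ℂ) (Complex.exp (2 * Real.pi * Complex.I / N)))^(j*i)
        * (Complex.exp (2 * Real.pi * Complex.I / N))^(j*k)
    = if i = k then (N:ℂ) else 0 := by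
  set ω : ℂ := Complex.exp (2 * Real.pi * Complex.I / N) with hω
  have hprim : IsPrimitiveRoot ω N := Complex.isPrimitiveRoot_exp N hN
  have hω0 : ω ≠ 0 := Complex.exp_ne_zero _
  have hconj : (starRingEnd ℂ) ω = ω⁻¹ := by
    rw [hω, ← Complex.exp_conj, ← Complex.exp_neg]
    congr 1
    simp [map_div₀, map_ofNat, Complex.conj_I, Complex.conj_ofReal]
    ring
  set ζ : ℂ := ω ^ ((k : ℤ) - (i : ℤ)) with hζdef
  have hterm : ∀ j, ((starRingEnd ℂ) ω)^(j*i) * ω^(j*k) = ζ ^ j := by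
    intro j
    rw [hconj, mul_comm j i, mul_comm j k, pow_mul, pow_mul, ← mul_pow]
    congr 1
    rw [hζdef, zpow_sub₀ hω0, zpow_natCast, zpow_natCast, inv_pow]
    ring
  rw [Finset.sum_congr rfl (fun j _ => hterm j)]
  have hζN : ζ ^ N = 1 := by
    rw [hζdef, ← zpow_natCast ((ω : ℂ) ^ ((k : ℤ) - (i : ℤ))), ← _root_.zpow_mul,
      hprim.zpow_eq_one_iff_dvd]
    exact dvd_mul_left _ _
  rw [root_sum N ζ hζN]
  have hiff : ζ = 1 ↔ i = k := by
    rw [hζdef, hprim.zpow_eq_one_iff_dvd]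
    constructor
    · intro hdvd
      have h0 : (k:ℤ) - i = 0 :=
        Int.eq_zero_of_dvd_of_natAbs_lt_natAbs hdvd (by omega)
      omega
    · rintro rfl; simp
  by_cases h : i = k
  · rw [if_pos (hiff.mpr h), if_pos h]
  · rw [if_neg (fun hc => h (hiff.mp hc)), if_neg h]

lemma tridiag_sum (n : ℕ) (a b b' : ℂ) :
    ∑ i ∈ Finset.range (n+1), ∑ k ∈ Finset.range (n+1),
      (if i = k then a else if i = k + 1 then b else if k = i + 1 then b' else 0)
    = (n+1 : ℂ) * a + (n:ℂ) * b + (n:ℂ) * b' := by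
  induction n with
  | zero => simp
  | succ n ih =>
    rw [Finset.sum_range_succ]
    have hrow : (∑ k ∈ Finset.range (n+1+1),
        (if n + 1 = k then a else if n + 1 = k + 1 then b else if k = n + 1 + 1 then b' else 0))
        = b + a := by
      rw [Finset.sum_range_succ, Finset.sum_eq_single_of_mem n (Finset.self_mem_range_succ n)]
      · simp
      · intro k hk hne
        have : k < n + 1 := Finset.mem_range.mp hk
        have e1 : ¬ n + 1 = k := by omega
        have e2 : ¬ n + 1 = k + 1 := by omega
        have e3 : ¬ k = n + 1 + 1 := by omega
        simp [e1, e2, e3, Ne.symm hne]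
    have hsplit : ∀ i ∈ Finset.range (n+1),
        (∑ k ∈ Finset.range (n+1+1),
          (if i = k then a else if i = k + 1 then b else if k = i + 1 then b' else 0))
        = (∑ k ∈ Finset.range (n+1),
          (if i = k then a else if i = k + 1 then b else if k = i + 1 then b' else 0))
          + (if n + 1 = i + 1 then b' else 0) := by
      intro i hi
      rw [Finset.sum_range_succ]
      have : i < n + 1 := Finset.mem_range.mp hi
      have e1 : ¬ i = n + 1 := by omega
      have e2 : ¬ i = n + 1 + 1 := by omega
      simp [e1, e2]
    rw [Finset.sum_congr rfl hsplit, Finset.sum_add_distrib, ih, hrow]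
    have hcol : (∑ i ∈ Finset.range (n+1), (if n + 1 = i + 1 then b' else 0)) = b' := by
      rw [Finset.sum_eq_single_of_mem n (Finset.self_mem_range_succ n)]
      · simp
      · intro i hi hne
        have : i < n + 1 := Finset.mem_range.mp hi
        have e3 : ¬ n + 1 = i + 1 := by omega
        simp [e3, Ne.symm hne]
    rw [hcol]
    push_cast
    ring

def Wmat (M n : ℕ) (ω : ℂ) (j : ℕ) : Matrix (Fin M) (Fin (n+1) × Fin M) ℂ :=
  Matrix.of fun a p => if a = p.2 then ω ^ (j * (p.1 : ℕ)) else 0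

def Amat (M : ℕ) (P Q R : Matrix (Fin M) (Fin M) ℂ) (z : ℂ) : Matrix (Fin M) (Fin M) ℂ :=
  (z * (starRingEnd ℂ) z) • P + z • Q + ((starRingEnd ℂ) z) • Qᴴ + R

lemma Wmat_entry (M n : ℕ) (ω : ℂ) (j : ℕ) (A : Matrix (Fin M) (Fin M) ℂ)
    (p q : Fin (n+1) × Fin M) :
    ((Wmat M n ω j)ᴴ * A * (Wmat M n ω j)) p q
    = ((starRingEnd ℂ) ω) ^ (j * (p.1:ℕ)) * (ω ^ (j * (q.1:ℕ)) * A p.2 q.2) := by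
  rw [Matrix.mul_apply]
  simp only [Wmat, Matrix.mul_apply, Matrix.conjTranspose_apply, Matrix.of_apply,
    apply_ite star, star_zero, star_pow, ite_mul, zero_mul, mul_ite, mul_zero,
    Finset.sum_ite_eq, Finset.sum_ite_eq', Finset.mem_univ, if_true, Complex.star_def]
  ring

lemma sum_identity (M n : ℕ) (P Q R : Matrix (Fin M) (Fin M) ℂ) (r : ℝ) :
    (∑ j ∈ Finset.range (n+2),
      (Wmat M n (Complex.exp (2 * Real.pi * Complex.I / (n+2:ℕ))) j)ᴴ
        * Amat M P Q R ((r:ℂ) * (Complex.exp (2 * Real.pi * Complex.I / (n+2:ℕ)))^j)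
        * Wmat M n (Complex.exp (2 * Real.pi * Complex.I / (n+2:ℕ))) j)
    = (((n:ℕ)+2 : ℂ)) • ToeplitzSection M n (R + ((r:ℂ)^2) • P) ((r:ℂ) • Q) := by
  set ω : ℂ := Complex.exp (2 * Real.pi * Complex.I / (n+2:ℕ)) with hω
  have hω0 : ω ≠ 0 := Complex.exp_ne_zero _
  have hconj : (starRingEnd ℂ) ω = ω⁻¹ := by
    rw [hω, ← Complex.exp_conj, ← Complex.exp_neg]
    congr 1
    simp [map_div₀, map_ofNat, Complex.conj_I, Complex.conj_ofReal]
    ring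
  have huv : ω * (starRingEnd ℂ) ω = 1 := by
    rw [hconj, mul_inv_cancel₀ hω0]
  ext p q
  obtain ⟨i, a⟩ := p
  obtain ⟨k, b⟩ := q
  rw [Matrix.sum_apply]
  have hterm : ∀ j ∈ Finset.range (n+2),
      ((Wmat M n ω j)ᴴ * Amat M P Q R ((r:ℂ) * ω^j) * Wmat M n ω j) (i,a) (k,b)
      = ((starRingEnd ℂ) ω) ^ (j * (i:ℕ)) * ω ^ (j * (k:ℕ)) * ((R + ((r:ℂ)^2) • P) a b)
        + ((starRingEnd ℂ) ω) ^ (j * (i:ℕ)) * ω ^ (j * ((k:ℕ)+1)) * ((r:ℂ) * Q a b)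
        + ((starRingEnd ℂ) ω) ^ (j * ((i:ℕ)+1)) * ω ^ (j * (k:ℕ))
            * ((r:ℂ) * (starRingEnd ℂ) (Q b a)) := by
    intro j _
    rw [Wmat_entry]
    have h1 : ω^j * ((starRingEnd ℂ) ω)^j = 1 := by
      rw [← mul_pow, huv, one_pow]
    simp only [Amat, Matrix.add_apply, Matrix.smul_apply, Matrix.conjTranspose_apply,
      smul_eq_mul, _root_.map_mul, map_pow, Complex.conj_ofReal, Complex.star_def]
    linear_combination ((r:ℂ)^2 * ((starRingEnd ℂ) ω) ^ (j * (i:ℕ)) * ω ^ (j * (k:ℕ))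
      * P a b) * h1
  rw [Finset.sum_congr rfl hterm]
  rw [Finset.sum_add_distrib, Finset.sum_add_distrib, ← Finset.sum_mul, ← Finset.sum_mul,
    ← Finset.sum_mul]
  have hN : (n+2 : ℕ) ≠ 0 := by omega
  rw [orth (n+2) hN i k (by omega) (by omega),
      orth (n+2) hN i (k+1) (by omega) (by omega),
      orth (n+2) hN (i+1) k (by omega) (by omega)]
  simp only [Matrix.smul_apply, ToeplitzSection, Matrix.of_apply, smul_eq_mul]
  by_cases h1 : (i:ℕ) = (k:ℕ)
  · have h2 : ¬ (i:ℕ) = (k:ℕ) + 1 := by omega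
    have h3 : ¬ (i:ℕ) + 1 = (k:ℕ) := by omega
    have h4 : ¬ (k:ℕ) = (i:ℕ) + 1 := by omega
    simp only [if_pos h1, if_neg h2, if_neg h3, if_neg h4]
    push_cast
    ring
  · by_cases h2 : (i:ℕ) = (k:ℕ) + 1
    · have h3 : ¬ (i:ℕ) + 1 = (k:ℕ) := by omega
      have h4 : ¬ (k:ℕ) = (i:ℕ) + 1 := by omega
      simp only [if_neg h1, if_pos h2, if_neg h3, if_neg h4, Matrix.smul_apply, smul_eq_mul]
      push_cast
      ring
    · by_cases h4 : (k:ℕ) = (i:ℕ) + 1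
      · have h3 : (i:ℕ) + 1 = (k:ℕ) := h4.symm
        simp only [if_neg h1, if_neg h2, if_pos h3, if_pos h4, Matrix.conjTranspose_apply,
          Matrix.smul_apply, smul_eq_mul, _root_.map_mul, Complex.conj_ofReal,
          Complex.star_def]
        push_cast
        ring
      · have h3 : ¬ (i:ℕ) + 1 = (k:ℕ) := fun hc => h4 hc.symm
        simp only [if_neg h1, if_neg h2, if_neg h3, if_neg h4, Matrix.zero_apply]
        ring

lemma psd_sum {m : Type*} [Fintype m] [DecidableEq m] {ι : Type*} (s : Finset ι)
    (f : ι → Matrix m m ℂ) (h : ∀ i ∈ s, (f i).PosSemidef) :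
    (∑ i ∈ s, f i).PosSemidef := by
  classical
  induction s using Finset.induction with
  | empty => simpa using Matrix.PosSemidef.zero
  | @insert x s hx ih =>
    rw [Finset.sum_insert hx]
    exact (h x (Finset.mem_insert_self x s)).add
      (ih fun i hi => h i (Finset.mem_insert_of_mem hi))

lemma psd_smul {m : Type*} [Fintype m] {A : Matrix m m ℂ} (h : A.PosSemidef)
    (c : ℝ) (hc : 0 ≤ c) : ((c:ℂ) • A).PosSemidef := by
  refine Matrix.posSemidef_iff_dotProduct_mulVec.mpr ⟨?_, ?_⟩
  · have h1 := h.1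
    unfold Matrix.IsHermitian at h1 ⊢
    rw [Matrix.conjTranspose_smul, h1]
    congr 1
    exact Complex.conj_ofReal c
  · intro x
    rw [Matrix.smul_mulVec, dotProduct_smul, smul_eq_mul]
    have h0 := h.dotProduct_mulVec_nonneg x
    rw [Complex.nonneg_iff] at h0 ⊢
    constructor
    · rw [Complex.mul_re, Complex.ofReal_re, Complex.ofReal_im, zero_mul, sub_zero]
      exact mul_nonneg hc h0.1
    · rw [Complex.mul_im, Complex.ofReal_re, Complex.ofReal_im, zero_mul, add_zero,
        ← h0.2, mul_zero]

lemma form_eval (M n : ℕ) (T S : Matrix (Fin M) (Fin M) ℂ) (c : ℂ)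
    (hc : c * (starRingEnd ℂ) c = 1) (x : Fin M → ℂ) :
    (star (fun p : Fin (n+1) × Fin M => ((starRingEnd ℂ) c) ^ (p.1 : ℕ) * x p.2)) ⬝ᵥ
      ((ToeplitzSection M n T S) *ᵥ (fun p => ((starRingEnd ℂ) c) ^ ((p.1 : ℕ)) * x p.2))
    = (n+1 : ℂ) * (star x ⬝ᵥ T *ᵥ x)
      + (n:ℂ) * (c * (star x ⬝ᵥ S *ᵥ x))
      + (n:ℂ) * ((starRingEnd ℂ) c * (star x ⬝ᵥ Sᴴ *ᵥ x)) := by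
  set Φ : Matrix (Fin M) (Fin M) ℂ → ℂ :=
    fun B => ∑ a : Fin M, (starRingEnd ℂ) (x a) * ∑ b : Fin M, B a b * x b with hΦ
  set g : ℕ → ℕ → ℂ := fun i k =>
    if i = k then Φ T else if i = k + 1 then c * Φ S
      else if k = i + 1 then (starRingEnd ℂ) c * Φ Sᴴ else 0 with hg
  simp only [dotProduct, Matrix.mulVec, Pi.star_apply, Complex.star_def, _root_.map_mul,
    map_pow, Complex.conj_conj]
  rw [Fintype.sum_prod_type]
  have key : ∀ i : Fin (n+1),
      (∑ a : Fin M, c ^ (i:ℕ) * (starRingEnd ℂ) (x a) *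
        ∑ q : Fin (n+1) × Fin M,
          ToeplitzSection M n T S (i, a) q * ((starRingEnd ℂ) c ^ (q.1:ℕ) * x q.2))
      = ∑ k : Fin (n+1), g (i:ℕ) (k:ℕ) := by
    intro i
    have step1 : ∀ a : Fin M,
        (∑ q : Fin (n+1) × Fin M,
          ToeplitzSection M n T S (i, a) q * ((starRingEnd ℂ) c ^ (q.1:ℕ) * x q.2))
        = ∑ k : Fin (n+1), ∑ b : Fin M,
            ToeplitzSection M n T S (i, a) (k, b) * ((starRingEnd ℂ) c ^ (k:ℕ) * x b) := by
      intro a; rw [Fintype.sum_prod_type]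
    rw [Finset.sum_congr rfl (fun a _ => by
      rw [step1 a, Finset.mul_sum])]
    rw [Finset.sum_comm]
    refine Finset.sum_congr rfl (fun k _ => ?_)
    have hpow : ∀ m : ℕ, c ^ m * ((starRingEnd ℂ) c) ^ m = 1 := by
      intro m; rw [← mul_pow, hc, one_pow]
    simp only [ToeplitzSection, Matrix.of_apply]
    by_cases h1 : (i:ℕ) = (k:ℕ)
    · rw [hg]; simp only [if_pos h1]
      rw [hΦ]
      refine Finset.sum_congr rfl (fun a _ => ?_)
      rw [show (∑ b : Fin M, T a b * ((starRingEnd ℂ) c ^ (k:ℕ) * x b))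
          = (starRingEnd ℂ) c ^ (k:ℕ) * ∑ b : Fin M, T a b * x b from by
        rw [Finset.mul_sum]; exact Finset.sum_congr rfl fun b _ => by ring]
      rw [h1]
      linear_combination ((starRingEnd ℂ) (x a) * (∑ b : Fin M, T a b * x b)) * hpow (k:ℕ)
    · by_cases h2 : (i:ℕ) = (k:ℕ) + 1
      · rw [hg]; simp only [if_neg h1, if_pos h2]
        rw [hΦ, Finset.mul_sum]
        refine Finset.sum_congr rfl (fun a _ => ?_)
        rw [show (∑ b : Fin M, S a b * ((starRingEnd ℂ) c ^ (k:ℕ) * x b))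
            = (starRingEnd ℂ) c ^ (k:ℕ) * ∑ b : Fin M, S a b * x b from by
          rw [Finset.mul_sum]; exact Finset.sum_congr rfl fun b _ => by ring]
        rw [h2]
        linear_combination (c * (starRingEnd ℂ) (x a) * (∑ b : Fin M, S a b * x b)) * hpow (k:ℕ)
      · by_cases h3 : (k:ℕ) = (i:ℕ) + 1
        · rw [hg]; simp only [if_neg h1, if_neg h2, if_pos h3]
          rw [hΦ, Finset.mul_sum]
          refine Finset.sum_congr rfl (fun a _ => ?_)
          rw [show (∑ b : Fin M, Sᴴ a b * ((starRingEnd ℂ) c ^ (k:ℕ) * x b))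
              = (starRingEnd ℂ) c ^ (k:ℕ) * ∑ b : Fin M, Sᴴ a b * x b from by
            rw [Finset.mul_sum]; exact Finset.sum_congr rfl fun b _ => by ring]
          rw [h3]
          linear_combination ((starRingEnd ℂ) c * (starRingEnd ℂ) (x a)
            * (∑ b : Fin M, Sᴴ a b * x b)) * hpow (i:ℕ)
        · rw [hg]; simp only [if_neg h1, if_neg h2, if_neg h3]
          simp
  rw [Finset.sum_congr rfl (fun i _ => key i)]
  have conv1 : (∑ i : Fin (n+1), ∑ k : Fin (n+1), g (i:ℕ) (k:ℕ))
      = ∑ i ∈ Finset.range (n+1), ∑ k ∈ Finset.range (n+1), g i k := by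
    rw [← Fin.sum_univ_eq_sum_range (fun i => ∑ k ∈ Finset.range (n+1), g i k) (n+1)]
    exact Finset.sum_congr rfl fun i _ => Fin.sum_univ_eq_sum_range (g (i:ℕ)) (n+1)
  rw [conv1, hg, tridiag_sum n (Φ T) (c * Φ S) ((starRingEnd ℂ) c * Φ Sᴴ)]

lemma herm_of_section {M : ℕ} {T S : Matrix (Fin M) (Fin M) ℂ}
    (h : (ToeplitzSection M 0 T S).IsHermitian) : T.IsHermitian := by
  apply Matrix.IsHermitian.ext
  intro a b
  have := h.apply ((0 : Fin 1), a) ((0 : Fin 1), b)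
  simpa [ToeplitzSection] using this

lemma amat_herm {M : ℕ} {P Q R : Matrix (Fin M) (Fin M) ℂ}
    (hP : P.IsHermitian) (hR : R.IsHermitian) (z : ℂ) :
    ((z * (starRingEnd ℂ) z) • P + z • Q + ((starRingEnd ℂ) z) • Qᴴ + R).IsHermitian := by
  apply Matrix.IsHermitian.ext
  intro a b
  simp only [Matrix.add_apply, Matrix.smul_apply, Matrix.conjTranspose_apply, smul_eq_mul,
    star_add, star_mul', Complex.star_def, _root_.map_mul, Complex.conj_conj]
  have hPe := hP.apply a b
  have hRe := hR.apply a b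
  simp only [Complex.star_def] at hPe hRe
  rw [hPe, hRe]
  ring

lemma limit_nonneg (Sv U : ℂ) (h : ∀ n : ℕ, 0 ≤ ((n:ℂ)+1) * Sv + (n:ℂ) * U) :
    0 ≤ Sv + U := by
  have h0 := h 0
  have h1 := h 1
  simp only [Nat.cast_zero, Nat.cast_one, zero_add, zero_mul, add_zero, one_mul] at h0 h1
  rw [Complex.nonneg_iff] at h0 h1 ⊢
  have him : U.im = 0 := by
    have h2 := h1.2
    have hS := h0.2
    simp only [Complex.add_im, Complex.mul_im, Complex.add_re, Complex.one_re,
      Complex.one_im] at h2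
    nlinarith [h2, hS]
  constructor
  · by_contra hneg
    push_neg at hneg
    simp only [Complex.add_re] at hneg
    set d : ℝ := -(Sv.re + U.re) with hd
    have hdpos : 0 < d := by simp [hd]; linarith
    obtain ⟨n, hn⟩ := exists_nat_gt (Sv.re / d)
    have hre := (Complex.nonneg_iff.mp (h n)).1
    simp only [Complex.add_re, Complex.mul_re, Complex.natCast_re, Complex.natCast_im,
      Complex.one_re, Complex.one_im, Complex.add_im, zero_mul, zero_add, add_zero,
      sub_zero, mul_zero] at hre
    have hmul : Sv.re < n * d := (div_lt_iff₀ hdpos).mp hn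
    nlinarith [hre, hmul]
  · have hS := h0.2
    simp only [Complex.add_im, ← hS, him]
    ring

/-- `|z|² P + z Q + z̄ Qᴴ + R ≥ 0` for all `z ∈ ℂ` iff for every `r ∈ ℝ` and every
`n ≥ 0` the `(n+1) × (n+1)` block Toeplitz matrix with diagonal blocks `R + r² P`,
subdiagonal blocks `r Q`, superdiagonal blocks `r Qᴴ` and zeros elsewhere is positive
semidefinite. -/
theorem quadPos_iff_toeplitz (M : ℕ) (P Q R : Matrix (Fin M) (Fin M) ℂ) :
    QuadPos M P Q R ↔
      ∀ (r : ℝ) (n : ℕ),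
        (ToeplitzSection M n (R + ((r : ℂ) ^ 2) • P) ((r : ℂ) • Q)).PosSemidef := by
  constructor
  · intro h r n
    have hid := sum_identity M n P Q R r
    have hpsd : ((((n:ℕ)+2 : ℂ)) •
        ToeplitzSection M n (R + ((r:ℂ)^2) • P) ((r:ℂ) • Q)).PosSemidef := by
      rw [← hid]
      exact psd_sum _ _ fun j _ =>
        Matrix.PosSemidef.conjTranspose_mul_mul_same (h _) _
    have hne : ((n:ℂ)+2) ≠ 0 := by
      intro hco
      have := congrArg Complex.re hco
      push_cast at this
      have : (0:ℝ) ≤ (n:ℝ) := Nat.cast_nonneg n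
      linarith
    have h2 := psd_smul hpsd (((n:ℝ)+2)⁻¹) (by positivity)
    have hcoef : ((((n:ℝ)+2)⁻¹ : ℝ) : ℂ) * ((n:ℂ)+2) = 1 := by
      push_cast
      exact inv_mul_cancel₀ hne
    rw [smul_smul, hcoef, one_smul] at h2
    exact h2
  · intro H z
    have hTH : ∀ r : ℝ, (R + ((r:ℂ)^2) • P).IsHermitian :=
      fun r => herm_of_section (H r 0).1
    have hR : R.IsHermitian := by
      have := hTH 0
      simpa using this
    have hP : P.IsHermitian := by
      have h1 := hTH 1
      simp only [Complex.ofReal_one, one_pow, one_smul] at h1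
      have := h1.sub hR
      simpa using this
    refine Matrix.posSemidef_iff_dotProduct_mulVec.mpr ⟨?_, ?_⟩
    · exact amat_herm hP hR z
    · intro x
      set r : ℝ := ‖z‖ with hr
      set c : ℂ := if z = 0 then 1 else z / (r:ℂ) with hcdef
      have hr0 : z ≠ 0 → r ≠ 0 := fun hz0 => by
        simpa [hr] using (norm_ne_zero_iff.mpr hz0)
      have hc : c * (starRingEnd ℂ) c = 1 := by
        by_cases hz0 : z = 0
        · simp [hcdef, hz0]
        · rw [hcdef, if_neg hz0, Complex.mul_conj]
          have : Complex.normSq (z / (r:ℂ)) = 1 := by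
            rw [Complex.normSq_div, Complex.normSq_ofReal, ← Complex.sq_norm, ← hr]
            field_simp [hr0 hz0]
          rw [this, Complex.ofReal_one]
      have hz : z = (r:ℂ) * c := by
        by_cases hz0 : z = 0
        · simp [hcdef, hz0, hr]
        · rw [hcdef, if_neg hz0, mul_comm, div_mul_cancel₀]
          exact Complex.ofReal_ne_zero.mpr (hr0 hz0)
      set Sv : ℂ := star x ⬝ᵥ (R + ((r:ℂ)^2) • P) *ᵥ x with hSv
      set U : ℂ := c * (star x ⬝ᵥ ((r:ℂ) • Q) *ᵥ x)
        + (starRingEnd ℂ) c * (star x ⬝ᵥ ((r:ℂ) • Q)ᴴ *ᵥ x) with hU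
      have hkey : ∀ n : ℕ, 0 ≤ ((n:ℂ)+1) * Sv + (n:ℂ) * U := by
        intro n
        have hform := (H r n).dotProduct_mulVec_nonneg
          (fun p : Fin (n+1) × Fin M => ((starRingEnd ℂ) c) ^ (p.1 : ℕ) * x p.2)
        rw [form_eval M n (R + ((r:ℂ)^2) • P) ((r:ℂ) • Q) c hc x] at hform
        rw [show ((n:ℂ)+1) * Sv + (n:ℂ) * U
            = ((n:ℂ)+1) * (star x ⬝ᵥ (R + ((r:ℂ)^2) • P) *ᵥ x)
              + (n:ℂ) * (c * (star x ⬝ᵥ ((r:ℂ) • Q) *ᵥ x))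
              + (n:ℂ) * ((starRingEnd ℂ) c * (star x ⬝ᵥ ((r:ℂ) • Q)ᴴ *ᵥ x)) from by
          rw [hSv, hU]; ring]
        exact hform
      have hfin := limit_nonneg Sv U hkey
      have hgoal : star x ⬝ᵥ (((z * (starRingEnd ℂ) z) • P + z • Q
            + ((starRingEnd ℂ) z) • Qᴴ + R) *ᵥ x) = Sv + U := by
        rw [hSv, hU]
        simp only [Matrix.add_mulVec, Matrix.smul_mulVec, dotProduct_add,
          dotProduct_smul, smul_eq_mul, Matrix.conjTranspose_smul,
          Complex.star_def, Complex.conj_ofReal]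
        rw [hz]
        simp only [_root_.map_mul, Complex.conj_ofReal]
        linear_combination ((r:ℂ)^2 * (star x ⬝ᵥ P *ᵥ x)) * hc
      rw [hgoal]
      exact hfin
end
end
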